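/- Fix ε ≥ 0 and define g(x) = Φ(x/2 − ε/x) − e^ε Φ(−x/2 − ε/x) for x > 0. Then g(x) → 0 as x → 0⁺ and g(x) → 1 as x → ∞; consequently, for every δ ∈ (0,1) there exists a unique B > 0 with g(B) = δ. -/

import Mathlib

open MeasureTheory ProbabilityTheory Filter

noncomputable def frob {m n : ℕ} (M : Matrix (Fin m) (Fin n) ℝ) : ℝ :=
  Real.sqrt (∑ i, ∑ j, (M i j)^2)

noncomputable def sv {m n : ℕ} (M : Matrix (Fin m) (Fin n) ℝ) : Fin n → ℝ :=
  fun i => Real.sqrt ((show (M.transpose * M).IsHermitian by simpa using Matrix.isHermitian_conjTranspose_mul_self M).eigenvalues i)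

/-- `σ` is the non-increasingly ordered tuple of singular values of `M`. -/
def IsSVals {m n : ℕ} (M : Matrix (Fin m) (Fin n) ℝ) (σ : Fin n → ℝ) : Prop :=
  Antitone σ ∧ ∃ e : Equiv.Perm (Fin n), σ = sv M ∘ e

/-- Standard normal CDF. -/
noncomputable def Phi (t : ℝ) : ℝ :=
  (Real.sqrt (2 * Real.pi))⁻¹ * ∫ u in Set.Iic t, Real.exp (-u^2/2)

open Set

lemma gauss_eq : (fun u : ℝ => Real.exp (-u^2/2)) = fun u : ℝ => Real.exp (-(1/2) * u^2) := by
  funext u; ring_nf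

lemma gauss_integrable : Integrable (fun u : ℝ => Real.exp (-u^2/2)) := by
  rw [gauss_eq]; exact integrable_exp_neg_mul_sq (by norm_num)

lemma gauss_total : ∫ u : ℝ, Real.exp (-u^2/2) = Real.sqrt (2 * Real.pi) := by
  rw [gauss_eq, integral_gaussian]
  norm_num [mul_comm]

lemma sqrt2pi_pos : 0 < Real.sqrt (2 * Real.pi) :=
  Real.sqrt_pos.2 (by positivity)

lemma phi_tendsto_atTop : Tendsto Phi atTop (nhds 1) := by
  have h := (MeasureTheory.aecover_Iic (μ := volume) (l := atTop) tendsto_id).integral_tendsto_of_countably_generated gauss_integrable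
  have := h.const_mul (Real.sqrt (2 * Real.pi))⁻¹
  rw [gauss_total, inv_mul_cancel₀ sqrt2pi_pos.ne'] at this
  exact this

lemma phi_tendsto_atBot : Tendsto Phi atBot (nhds 0) := by
  have h := (MeasureTheory.aecover_Ioi (μ := volume) (l := atBot) tendsto_id).integral_tendsto_of_countably_generated gauss_integrable
  have key : ∀ t : ℝ, Phi t = (Real.sqrt (2 * Real.pi))⁻¹ *
      ((∫ u : ℝ, Real.exp (-u^2/2)) - ∫ u in Set.Ioi t, Real.exp (-u^2/2)) := by
    intro t
    rw [← intervalIntegral.integral_Iic_add_Ioi gauss_integrable.integrableOn gauss_integrable.integrableOn (b := t)]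
    unfold Phi
    ring
  have : Tendsto (fun t : ℝ => (Real.sqrt (2 * Real.pi))⁻¹ *
      ((∫ u : ℝ, Real.exp (-u^2/2)) - ∫ u in Set.Ioi t, Real.exp (-u^2/2))) atBot (nhds 0) := by
    have := ((tendsto_const_nhds (x := ∫ u : ℝ, Real.exp (-u^2/2))).sub h).const_mul (Real.sqrt (2 * Real.pi))⁻¹
    simpa using this
  exact Tendsto.congr (fun t => (key t).symm) this

lemma phi_hasDerivAt (t : ℝ) :
    HasDerivAt Phi ((Real.sqrt (2 * Real.pi))⁻¹ * Real.exp (-t^2/2)) t := by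
  have hcont : Continuous (fun u : ℝ => Real.exp (-u^2/2)) := by fun_prop
  have key : Phi = fun u => (Real.sqrt (2 * Real.pi))⁻¹ *
      ((∫ x in Set.Iic (0:ℝ), Real.exp (-x^2/2)) + ∫ x in (0:ℝ)..u, Real.exp (-x^2/2)) := by
    funext u
    rw [← intervalIntegral.integral_Iic_sub_Iic gauss_integrable.integrableOn gauss_integrable.integrableOn]
    unfold Phi
    ring
  rw [key]
  exact (((intervalIntegral.integral_hasDerivAt_right
    (gauss_integrable.intervalIntegrable)
    (hcont.stronglyMeasurableAtFilter _ _) hcont.continuousAt).const_add _).const_mul _)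

lemma phi_continuous : Continuous Phi :=
  continuous_iff_continuousAt.2 fun t => (phi_hasDerivAt t).continuousAt

lemma g_hasDerivAt (ε : ℝ) {x : ℝ} (hx : 0 < x) :
    HasDerivAt (fun x : ℝ => Phi (x/2 - ε/x) - Real.exp ε * Phi (-x/2 - ε/x))
      ((Real.sqrt (2 * Real.pi))⁻¹ * Real.exp (-(x/2 - ε/x)^2/2)) x := by
  have hx0 : x ≠ 0 := hx.ne'
  have hinv : HasDerivAt (fun y : ℝ => ε / y) (ε * -(x^2)⁻¹) x := by
    simpa [div_eq_mul_inv] using (hasDerivAt_inv hx0).const_mul ε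
  have h1 : HasDerivAt (fun y : ℝ => y / 2) (1/2 : ℝ) x := by
    simpa using (hasDerivAt_id x).div_const 2
  have ha : HasDerivAt (fun y : ℝ => y/2 - ε/y) (1/2 - ε * -(x^2)⁻¹) x := h1.sub hinv
  have hb : HasDerivAt (fun y : ℝ => -y/2 - ε/y) (-(1/2) - ε * -(x^2)⁻¹) x := by
    have : HasDerivAt (fun y : ℝ => -(y/2) - ε/y) (-(1/2) - ε * -(x^2)⁻¹) x := (h1.neg).sub hinv
    simpa [neg_div] using this
  have hP1 := (phi_hasDerivAt (x/2 - ε/x)).comp x ha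
  have hP2 := ((phi_hasDerivAt (-x/2 - ε/x)).comp x hb).const_mul (Real.exp ε)
  have hident : Real.exp ε * Real.exp (-(-x/2 - ε/x)^2/2) = Real.exp (-(x/2 - ε/x)^2/2) := by
    rw [← Real.exp_add]
    congr 1
    field_simp
    ring
  exact (hP1.sub hP2).congr_deriv (by
    linear_combination (-((Real.sqrt (2*Real.pi))⁻¹ * (-(1/2) - ε * -(x^2)⁻¹))) * hident)

lemma g_strictMono (ε : ℝ) :
    StrictMonoOn (fun x : ℝ => Phi (x/2 - ε/x) - Real.exp ε * Phi (-x/2 - ε/x)) (Set.Ioi 0) := by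
  refine strictMonoOn_of_hasDerivWithinAt_pos
    (f' := fun x => (Real.sqrt (2*Real.pi))⁻¹ * Real.exp (-(x/2 - ε/x)^2/2)) (convex_Ioi 0)
    (fun x hx => ((g_hasDerivAt ε hx).continuousAt).continuousWithinAt)
    (fun x hx => ?_) (fun x hx => ?_)
  · rw [interior_Ioi] at hx
    exact (g_hasDerivAt ε hx).hasDerivWithinAt
  · positivity

lemma g_tendsto_atTop (ε : ℝ) :
    Tendsto (fun x : ℝ => Phi (x/2 - ε/x) - Real.exp ε * Phi (-x/2 - ε/x))
      atTop (nhds 1) := by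
  have hdiv : Tendsto (fun x : ℝ => ε / x) atTop (nhds 0) := by
    simpa [div_eq_mul_inv] using tendsto_inv_atTop_zero.const_mul ε
  have hhalf : Tendsto (fun x : ℝ => x / 2) atTop atTop :=
    (tendsto_id (α := ℝ)).atTop_div_const (by norm_num)
  have hA : Tendsto (fun x : ℝ => x/2 - ε/x) atTop atTop :=
    Tendsto.atTop_add hhalf (by simpa using hdiv.neg)
  have hB : Tendsto (fun x : ℝ => -x/2 - ε/x) atTop atBot := by
    refine Tendsto.atBot_add ?_ (by simpa using hdiv.neg)
    simpa [neg_div, Function.comp_def] using tendsto_neg_atTop_atBot.comp hhalf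
  have := (phi_tendsto_atTop.comp hA).sub ((phi_tendsto_atBot.comp hB).const_mul (Real.exp ε))
  simpa using this

lemma g_tendsto_zero (ε : ℝ) (hε : 0 ≤ ε) :
    Tendsto (fun x : ℝ => Phi (x/2 - ε/x) - Real.exp ε * Phi (-x/2 - ε/x))
      (nhdsWithin 0 (Set.Ioi 0)) (nhds 0) := by
  rcases eq_or_lt_of_le hε with h0 | hpos
  · subst h0
    have hc : Continuous (fun x : ℝ => Phi (x/2 - 0/x) - Real.exp 0 * Phi (-x/2 - 0/x)) := by
      simp only [zero_div, sub_zero, Real.exp_zero, one_mul]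
      exact (phi_continuous.comp (continuous_id.div_const 2)).sub
        (phi_continuous.comp (continuous_id.neg.div_const 2))
    have := hc.tendsto' 0 0 (by simp [Phi])
    exact this.mono_left nhdsWithin_le_nhds
  · have hdiv : Tendsto (fun x : ℝ => ε / x) (nhdsWithin 0 (Set.Ioi 0)) atTop := by
      simpa [div_eq_mul_inv] using tendsto_inv_nhdsGT_zero.const_mul_atTop hpos
    have hhalf : Tendsto (fun x : ℝ => x / 2) (nhdsWithin 0 (Set.Ioi 0)) (nhds 0) := by
      have : Tendsto (fun x : ℝ => x / 2) (nhds 0) (nhds 0) := by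
        simpa using (continuous_id.div_const 2).tendsto' 0 0 (by simp)
      exact this.mono_left nhdsWithin_le_nhds
    have hnd : Tendsto (fun x : ℝ => -(ε/x)) (nhdsWithin 0 (Set.Ioi 0)) atBot := by
      simpa [Function.comp_def] using tendsto_neg_atTop_atBot.comp hdiv
    have hA : Tendsto (fun x : ℝ => x/2 - ε/x) (nhdsWithin 0 (Set.Ioi 0)) atBot := by
      simpa [sub_eq_add_neg] using Tendsto.add_atBot hhalf hnd
    have hB : Tendsto (fun x : ℝ => -x/2 - ε/x) (nhdsWithin 0 (Set.Ioi 0)) atBot := by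
      have hhalf' : Tendsto (fun x : ℝ => -x / 2) (nhdsWithin 0 (Set.Ioi 0)) (nhds 0) := by
        simpa [neg_div] using hhalf.neg
      simpa [sub_eq_add_neg] using Tendsto.add_atBot hhalf' hnd
    have := (phi_tendsto_atBot.comp hA).sub ((phi_tendsto_atBot.comp hB).const_mul (Real.exp ε))
    simpa using this

theorem stmt8 (ε : ℝ) (hε : 0 ≤ ε) :
    Tendsto (fun x : ℝ => Phi (x/2 - ε/x) - Real.exp ε * Phi (-x/2 - ε/x))
      (nhdsWithin 0 (Set.Ioi 0)) (nhds 0) ∧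
    Tendsto (fun x : ℝ => Phi (x/2 - ε/x) - Real.exp ε * Phi (-x/2 - ε/x))
      atTop (nhds 1) ∧
    ∀ δ : ℝ, δ ∈ Set.Ioo (0:ℝ) 1 →
      ∃! B : ℝ, 0 < B ∧ Phi (B/2 - ε/B) - Real.exp ε * Phi (-B/2 - ε/B) = δ := by
  refine ⟨g_tendsto_zero ε hε, g_tendsto_atTop ε, ?_⟩
  intro δ hδ
  obtain ⟨hδ0, hδ1⟩ := hδ
  set g := fun x : ℝ => Phi (x/2 - ε/x) - Real.exp ε * Phi (-x/2 - ε/x) with hg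
  have h1 : ∀ᶠ x in nhdsWithin 0 (Set.Ioi 0), g x < δ :=
    (g_tendsto_zero ε hε).eventually_lt_const hδ0
  obtain ⟨x₁, hx₁δ, hx₁pos⟩ := (h1.and (eventually_mem_nhdsWithin)).exists
  obtain ⟨x₂, hx₂δ, hx₁₂⟩ :=
    (((g_tendsto_atTop ε).eventually_const_lt hδ1).and (eventually_ge_atTop x₁)).exists
  have hcont : ContinuousOn g (Set.Icc x₁ x₂) := fun x hx =>
    ((g_hasDerivAt ε (lt_of_lt_of_le hx₁pos hx.1)).continuousAt).continuousWithinAt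
  have hmem : δ ∈ Set.Icc (g x₁) (g x₂) := ⟨hx₁δ.le, hx₂δ.le⟩
  obtain ⟨B, hBmem, hBeq⟩ := intermediate_value_Icc hx₁₂ hcont hmem
  have hBpos : 0 < B := lt_of_lt_of_le hx₁pos hBmem.1
  refine ⟨B, ⟨hBpos, hBeq⟩, ?_⟩
  rintro C ⟨hCpos, hCeq⟩
  exact (g_strictMono ε).injOn hCpos hBpos (hCeq.trans hBeq.symm)
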